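/- Let (U,V) be a complete hereditary cotorsion pair in Mod-A that is weakly right periodic, and let n ≥ 0. If max{relspli(U), relFPD(U)} ≤ n, then an A-module M is injective if and only if M has U-projective dimension at most n and Ext_A^1(L,M) = 0 for every module L of U-projective dimension at most n. -/

import Mathlib

universe u

open CategoryTheory Limits

namespace OSG

variable (A : Type u) [Ring A]

/-- `Ext¹_A(M,N) = 0`: every short exact sequence `0 → N → E → M → 0` splits. -/
def Ext1Zero (M N : ModuleCat.{u} A) : Prop :=
  ∀ (E : ModuleCat.{u} A) (i : N ⟶ E) (p : E ⟶ M),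
    Function.Injective i → Function.Surjective p →
      LinearMap.range i.hom = LinearMap.ker p.hom → ∃ r : E ⟶ N, i ≫ r = 𝟙 N

/-- `Ext^{n+1}_A(M,N) = 0`, expressed by dimension shifting along projective resolutions. -/
def ExtZeroSucc (n : ℕ) (M N : ModuleCat.{u} A) : Prop :=
  ∀ P : ProjectiveResolution M, Ext1Zero A (cokernel (P.complex.d (n + 1) n)) N

def IsCotorsionPair (U V : Set (ModuleCat.{u} A)) : Prop :=
  U = {M | ∀ N ∈ V, Ext1Zero A M N} ∧ V = {N | ∀ M ∈ U, Ext1Zero A M N}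

/-- Every module has a special `U`-precover and a special `V`-preenvelope. -/
def IsCompletePair (U V : Set (ModuleCat.{u} A)) : Prop :=
  (∀ M : ModuleCat.{u} A, ∃ (K U₀ : ModuleCat.{u} A) (j : K ⟶ U₀) (p : U₀ ⟶ M),
      U₀ ∈ U ∧ K ∈ V ∧ Function.Injective j ∧ Function.Surjective p ∧
        LinearMap.range j.hom = LinearMap.ker p.hom) ∧
  (∀ M : ModuleCat.{u} A, ∃ (V₀ C : ModuleCat.{u} A) (ι : M ⟶ V₀) (q : V₀ ⟶ C),
      V₀ ∈ V ∧ C ∈ U ∧ Function.Injective ι ∧ Function.Surjective q ∧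
        LinearMap.range ι.hom = LinearMap.ker q.hom)

def IsHereditaryPair (U V : Set (ModuleCat.{u} A)) : Prop :=
  ∀ M ∈ U, ∀ N ∈ V, ∀ n : ℕ, ExtZeroSucc A n M N

def leftPerp (C : Set (ModuleCat.{u} A)) : Set (ModuleCat.{u} A) :=
  {M | ∀ N ∈ C, Ext1Zero A M N}

def rightPerp (C : Set (ModuleCat.{u} A)) : Set (ModuleCat.{u} A) :=
  {N | ∀ M ∈ C, Ext1Zero A M N}

def GeneratedBySet (V : Set (ModuleCat.{u} A)) : Prop :=
  ∃ S : Set (ModuleCat.{u} A), V = rightPerp A S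

/-- `M` has a resolution `0 → U_n → ⋯ → U_0 → M → 0` with all `U_i ∈ U`
(i.e. `U`-projective dimension at most `n`). -/
def ResLE (U : Set (ModuleCat.{u} A)) : ℕ → ModuleCat.{u} A → Prop
  | 0, M => M ∈ U
  | n + 1, M =>
    ResLE U n M ∨
      ∃ (K U₀ : ModuleCat.{u} A) (j : K ⟶ U₀) (p : U₀ ⟶ M),
        U₀ ∈ U ∧ Function.Injective j ∧ Function.Surjective p ∧
          LinearMap.range j.hom = LinearMap.ker p.hom ∧ ResLE U n K

/-- `M` has a coresolution `0 → M → V^0 → ⋯ → V^n → 0` with all `V^i ∈ V`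
(i.e. `V`-injective dimension at most `n`). -/
def CoresLE (V : Set (ModuleCat.{u} A)) : ℕ → ModuleCat.{u} A → Prop
  | 0, M => M ∈ V
  | n + 1, M =>
    CoresLE V n M ∨
      ∃ (V₀ C : ModuleCat.{u} A) (ι : M ⟶ V₀) (q : V₀ ⟶ C),
        V₀ ∈ V ∧ Function.Injective ι ∧ Function.Surjective q ∧
          LinearMap.range ι.hom = LinearMap.ker q.hom ∧ CoresLE V n C

/-- The `U`-projective dimension of `M`, as an extended natural number. -/
noncomputable def resDim (U : Set (ModuleCat.{u} A)) (M : ModuleCat.{u} A) : ℕ∞ :=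
  sInf {c : ℕ∞ | ∃ n : ℕ, c = n ∧ ResLE A U n M}

/-- The `V`-injective dimension of `M`, as an extended natural number. -/
noncomputable def coresDim (V : Set (ModuleCat.{u} A)) (M : ModuleCat.{u} A) : ℕ∞ :=
  sInf {c : ℕ∞ | ∃ n : ℕ, c = n ∧ CoresLE A V n M}

def prjClass : Set (ModuleCat.{u} A) := {M | Projective M}

def injClass : Set (ModuleCat.{u} A) := {M | Injective M}

section Complexes

/-- The complex `T` is acyclic (exact everywhere). -/
def Acyclic (T : ChainComplex (ModuleCat.{u} A) ℤ) : Prop := ∀ n : ℤ, T.ExactAt n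

/-- The complex `Hom_A(E, T)` is acyclic. -/
def HomIntoExact (E : ModuleCat.{u} A) (T : ChainComplex (ModuleCat.{u} A) ℤ) : Prop :=
  ∀ (n : ℤ) (f : E ⟶ T.X n), f ≫ T.d n (n - 1) = 0 →
    ∃ g : E ⟶ T.X (n + 1), g ≫ T.d (n + 1) n = f

/-- The complex `Hom_A(T, W)` is acyclic. -/
def HomFromExact (T : ChainComplex (ModuleCat.{u} A) ℤ) (W : ModuleCat.{u} A) : Prop :=
  ∀ (n : ℤ) (f : T.X n ⟶ W), T.d (n + 1) n ≫ f = 0 →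
    ∃ g : T.X (n - 1) ⟶ W, T.d n (n - 1) ≫ g = f

/-- `M` is a Gorenstein injective `A`-module. -/
def GorensteinInjective (M : ModuleCat.{u} A) : Prop :=
  ∃ T : ChainComplex (ModuleCat.{u} A) ℤ,
    (∀ n, Injective (T.X n)) ∧ Acyclic A T ∧
      (∀ E : ModuleCat.{u} A, Injective E → HomIntoExact A E T) ∧
      ∃ n : ℤ, Nonempty (M ≅ T.cycles n)

/-- `M` is a Gorenstein projective `A`-module. -/
def GorensteinProjective (M : ModuleCat.{u} A) : Prop :=
  ∃ T : ChainComplex (ModuleCat.{u} A) ℤ,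
    (∀ n, Projective (T.X n)) ∧ Acyclic A T ∧
      (∀ Q : ModuleCat.{u} A, Projective Q → HomFromExact A T Q) ∧
      ∃ n : ℤ, Nonempty (M ≅ T.cycles n)

end Complexes
section Tensor

/-- The balancing relations inside `N ⊗_ℤ M` for a right module `N` and a left module `M`. -/
def balRel (N : ModuleCat.{u} Aᵐᵒᵖ) (M : ModuleCat.{u} A) :
    Submodule ℤ (TensorProduct ℤ N M) :=
  Submodule.span ℤ
    {x | ∃ (n : N) (a : A) (m : M),
      x = (MulOpposite.op a • n) ⊗ₜ[ℤ] m - n ⊗ₜ[ℤ] (a • m)}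

/-- The tensor product `N ⊗_A M` of a right `A`-module and a left `A`-module. -/
def balTensor (N : ModuleCat.{u} Aᵐᵒᵖ) (M : ModuleCat.{u} A) : Type u :=
  TensorProduct ℤ N M ⧸ balRel A N M

noncomputable instance (N : ModuleCat.{u} Aᵐᵒᵖ) (M : ModuleCat.{u} A) :
    AddCommGroup (balTensor A N M) :=
  inferInstanceAs (AddCommGroup (TensorProduct ℤ N M ⧸ balRel A N M))

noncomputable instance (N : ModuleCat.{u} Aᵐᵒᵖ) (M : ModuleCat.{u} A) :
    Module ℤ (balTensor A N M) :=
  inferInstanceAs (Module ℤ (TensorProduct ℤ N M ⧸ balRel A N M))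

/-- The map `N ⊗_A M → N ⊗_A M'` induced by `f : M → M'`. -/
noncomputable def balMap (N : ModuleCat.{u} Aᵐᵒᵖ) {M M' : ModuleCat.{u} A} (f : M ⟶ M') :
    balTensor A N M →ₗ[ℤ] balTensor A N M' :=
  Submodule.mapQ (balRel A N M) (balRel A N M')
    (LinearMap.lTensor (R := ℤ) N f.hom.toAddMonoidHom.toIntLinearMap)
    (by
      unfold balRel
      rw [Submodule.span_le]
      rintro x ⟨n, a, m, rfl⟩
      refine Submodule.mem_comap.mpr ?_
      erw [map_sub, LinearMap.lTensor_tmul, LinearMap.lTensor_tmul]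
      have h : f.hom.toAddMonoidHom.toIntLinearMap (a • m) = a • f.hom.toAddMonoidHom.toIntLinearMap m :=
        f.hom.map_smul a m
      rw [h]
      exact Submodule.subset_span ⟨n, a, f.hom.toAddMonoidHom.toIntLinearMap m, rfl⟩)

/-- The map `N ⊗_A M → N' ⊗_A M` induced by `g : N → N'`. -/
noncomputable def balMapR {N N' : ModuleCat.{u} Aᵐᵒᵖ} (g : N ⟶ N') (M : ModuleCat.{u} A) :
    balTensor A N M →ₗ[ℤ] balTensor A N' M :=
  Submodule.mapQ (balRel A N M) (balRel A N' M)
    (LinearMap.rTensor (R := ℤ) M g.hom.toAddMonoidHom.toIntLinearMap)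
    (by
      unfold balRel
      rw [Submodule.span_le]
      rintro x ⟨n, a, m, rfl⟩
      refine Submodule.mem_comap.mpr ?_
      erw [map_sub, LinearMap.rTensor_tmul, LinearMap.rTensor_tmul]
      have h : g.hom.toAddMonoidHom.toIntLinearMap (MulOpposite.op a • n) =
          MulOpposite.op a • g.hom.toAddMonoidHom.toIntLinearMap n :=
        g.hom.map_smul (MulOpposite.op a) n
      rw [h]
      exact Submodule.subset_span ⟨g.hom.toAddMonoidHom.toIntLinearMap n, a, m, rfl⟩)

/-- A left `A`-module `M` is flat if `− ⊗_A M` preserves injections of right `A`-modules. -/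
def FlatM (M : ModuleCat.{u} A) : Prop :=
  ∀ (N N' : ModuleCat.{u} Aᵐᵒᵖ) (g : N ⟶ N'), Function.Injective g →
    Function.Injective (balMapR A g M)

def flatClass : Set (ModuleCat.{u} A) := {M | FlatM A M}

/-- `M` is cotorsion if `Ext¹_A(F,M) = 0` for every flat module `F`. -/
def cotClass : Set (ModuleCat.{u} A) := {M | ∀ F ∈ flatClass A, Ext1Zero A F M}

end Tensor
section Rest

variable (A : Type u) [Ring A]

/-- Exactness of `N ⊗_A T` at spot `n`. -/
def TensorExactAt (N : ModuleCat.{u} Aᵐᵒᵖ) (T : ChainComplex (ModuleCat.{u} A) ℤ)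
    (n : ℤ) : Prop :=
  LinearMap.range (balMap A N (T.d (n + 1) n)) = LinearMap.ker (balMap A N (T.d n (n - 1)))

/-- `M` is a Gorenstein flat `A`-module. -/
def GorensteinFlat (M : ModuleCat.{u} A) : Prop :=
  ∃ T : ChainComplex (ModuleCat.{u} A) ℤ,
    (∀ n, T.X n ∈ flatClass A) ∧ Acyclic A T ∧
      (∀ N : ModuleCat.{u} Aᵐᵒᵖ, Injective N → ∀ n : ℤ, TensorExactAt A N T n) ∧
      ∃ n : ℤ, Nonempty (M ≅ T.cycles n)

def gprjClass : Set (ModuleCat.{u} A) := {M | GorensteinProjective A M}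
def ginjClass : Set (ModuleCat.{u} A) := {M | GorensteinInjective A M}
def gflatClass : Set (ModuleCat.{u} A) := {M | GorensteinFlat A M}

/-- projective dimension -/
noncomputable def pdim (M : ModuleCat.{u} A) : ℕ∞ := resDim A (prjClass A) M
/-- injective dimension -/
noncomputable def idim (M : ModuleCat.{u} A) : ℕ∞ := coresDim A (injClass A) M
/-- flat dimension -/
noncomputable def fdim (M : ModuleCat.{u} A) : ℕ∞ := resDim A (flatClass A) M
/-- Gorenstein projective dimension -/
noncomputable def gpdim (M : ModuleCat.{u} A) : ℕ∞ := resDim A (gprjClass A) M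
/-- Gorenstein injective dimension -/
noncomputable def gidim (M : ModuleCat.{u} A) : ℕ∞ := coresDim A (ginjClass A) M
/-- Gorenstein flat dimension -/
noncomputable def gfdim (M : ModuleCat.{u} A) : ℕ∞ := resDim A (gflatClass A) M

noncomputable def spli : ℕ∞ := ⨆ (I : ModuleCat.{u} A) (_ : Injective I), pdim A I
noncomputable def silp : ℕ∞ := ⨆ (P : ModuleCat.{u} A) (_ : Projective P), idim A P
noncomputable def sfli : ℕ∞ := ⨆ (I : ModuleCat.{u} A) (_ : Injective I), fdim A I
noncomputable def splf : ℕ∞ := ⨆ (F : ModuleCat.{u} A) (_ : F ∈ flatClass A), pdim A F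

noncomputable def FPD : ℕ∞ := ⨆ (M : ModuleCat.{u} A) (_ : pdim A M ≠ ⊤), pdim A M
noncomputable def FID : ℕ∞ := ⨆ (M : ModuleCat.{u} A) (_ : idim A M ≠ ⊤), idim A M
noncomputable def FFD : ℕ∞ := ⨆ (M : ModuleCat.{u} A) (_ : fdim A M ≠ ⊤), fdim A M

/-- Gorenstein global dimension. -/
noncomputable def Ggldim : ℕ∞ := ⨆ (M : ModuleCat.{u} A), gpdim A M
/-- Gorenstein weak global dimension. -/
noncomputable def Gwgldim : ℕ∞ := ⨆ (M : ModuleCat.{u} A), gfdim A M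

/-- sup of `U`-projective dimensions of injective modules. -/
noncomputable def relspli (U : Set (ModuleCat.{u} A)) : ℕ∞ :=
  ⨆ (I : ModuleCat.{u} A) (_ : Injective I), resDim A U I
/-- sup of `V`-injective dimensions of projective modules. -/
noncomputable def relsilp (V : Set (ModuleCat.{u} A)) : ℕ∞ :=
  ⨆ (P : ModuleCat.{u} A) (_ : Projective P), coresDim A V P
/-- finitistic `U`-projective dimension. -/
noncomputable def relFPD (U : Set (ModuleCat.{u} A)) : ℕ∞ :=
  ⨆ (M : ModuleCat.{u} A) (_ : resDim A U M ≠ ⊤), resDim A U M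
/-- finitistic `V`-injective dimension. -/
noncomputable def relFID (V : Set (ModuleCat.{u} A)) : ℕ∞ :=
  ⨆ (M : ModuleCat.{u} A) (_ : coresDim A V M ≠ ⊤), coresDim A V M

/-- Every acyclic complex of injectives has cycles in `V`. -/
def WeaklyRightPeriodic (V : Set (ModuleCat.{u} A)) : Prop :=
  ∀ T : ChainComplex (ModuleCat.{u} A) ℤ,
    (∀ n, Injective (T.X n)) → Acyclic A T → ∀ n : ℤ, T.cycles n ∈ V

/-- Every acyclic complex of projectives has cycles in `U`. -/
def WeaklyLeftPeriodic (U : Set (ModuleCat.{u} A)) : Prop :=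
  ∀ T : ChainComplex (ModuleCat.{u} A) ℤ,
    (∀ n, Projective (T.X n)) → Acyclic A T → ∀ n : ℤ, T.cycles n ∈ U

/-- A right `U`-totally acyclic complex witnesses a right `U`-Gorenstein module. -/
def RightGorenstein (U V : Set (ModuleCat.{u} A)) : Set (ModuleCat.{u} A) :=
  {M | ∃ T : ChainComplex (ModuleCat.{u} A) ℤ,
    (∀ n, T.X n ∈ U) ∧ Acyclic A T ∧ (∀ n : ℤ, T.cycles n ∈ V) ∧
      (∀ W ∈ U ∩ V, HomFromExact A T W) ∧ Nonempty (M ≅ cokernel (T.d 1 0))}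

/-- acyclic with all cycles in `V`. -/
def VAcyclicCx (V : Set (ModuleCat.{u} A)) (W : ChainComplex (ModuleCat.{u} A) ℤ) : Prop :=
  Acyclic A W ∧ ∀ n : ℤ, W.cycles n ∈ V

/-- acyclic with all cycles in `U`. -/
def UAcyclicCx (U : Set (ModuleCat.{u} A)) (W : ChainComplex (ModuleCat.{u} A) ℤ) : Prop :=
  Acyclic A W ∧ ∀ n : ℤ, W.cycles n ∈ U

/-- A complex of modules in `U` is semi-`U` if every chain map to a `V`-acyclic
complex is null-homotopic (equivalently, `Hom(X,W)` is acyclic for `V`-acyclic `W`). -/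
def SemiU (U V : Set (ModuleCat.{u} A)) (X : ChainComplex (ModuleCat.{u} A) ℤ) : Prop :=
  (∀ n, X.X n ∈ U) ∧
    ∀ W : ChainComplex (ModuleCat.{u} A) ℤ, VAcyclicCx A V W →
      ∀ f : X ⟶ W, Nonempty (Homotopy f 0)

/-- A complex of modules in `V` is semi-`V` if every chain map from a `U`-acyclic
complex to it is null-homotopic. -/
def SemiV (U V : Set (ModuleCat.{u} A)) (Y : ChainComplex (ModuleCat.{u} A) ℤ) : Prop :=
  (∀ n, Y.X n ∈ V) ∧
    ∀ T : ChainComplex (ModuleCat.{u} A) ℤ, UAcyclicCx A U T →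
      ∀ f : T ⟶ Y, Nonempty (Homotopy f 0)

/-- `W` is isomorphic to the module `M` in the derived category. -/
def IsReplacementOf (W : ChainComplex (ModuleCat.{u} A) ℤ) (M : ModuleCat.{u} A) : Prop :=
  (∀ n : ℤ, n ≠ 0 → W.ExactAt n) ∧ Nonempty (W.homology 0 ≅ M)

/-- `RGor_U`-projective dimension of `M` is at most `n`: some semi-`U`-`V` replacement `W`
of `M` has `Coker(W_{n+1} → W_n)` right `U`-Gorenstein. -/
def RGorpdLE (U V : Set (ModuleCat.{u} A)) (n : ℕ) (M : ModuleCat.{u} A) : Prop :=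
  ∃ W : ChainComplex (ModuleCat.{u} A) ℤ,
    SemiU A U V W ∧ SemiV A U V W ∧ IsReplacementOf A W M ∧
      cokernel (W.d ((n : ℤ) + 1) (n : ℤ)) ∈ RightGorenstein A U V

/-- The `RGor_U`-projective dimension. -/
noncomputable def rgorDim (U V : Set (ModuleCat.{u} A)) (M : ModuleCat.{u} A) : ℕ∞ :=
  sInf {c : ℕ∞ | ∃ n : ℕ, c = n ∧ RGorpdLE A U V n M}

/-- The `RGor_U` relative Gorenstein global dimension. -/
noncomputable def rgorGldim (U V : Set (ModuleCat.{u} A)) : ℕ∞ :=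
  ⨆ (M : ModuleCat.{u} A), rgorDim A U V M

/-- The Gorenstein flat-cotorsion dimension. -/
noncomputable def gfcDim (M : ModuleCat.{u} A) : ℕ∞ :=
  rgorDim A (flatClass A) (cotClass A) M

/-- The Gorenstein flat-cotorsion global dimension. -/
noncomputable def Gfcgldim : ℕ∞ := rgorGldim A (flatClass A) (cotClass A)

/-- `A` is right weak coherent: products of flat left `A`-modules have finite
flat dimension. -/
def RightWeakCoherent : Prop :=
  ∀ (ι : Type u) (F : ι → ModuleCat.{u} A), (∀ i, F i ∈ flatClass A) →
    fdim A (ModuleCat.of A ((i : ι) → F i)) ≠ ⊤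

/-- `A` is left `ℵ₀`-noetherian: every left ideal is countably generated. -/
def Aleph0Noetherian : Prop :=
  ∀ I : Ideal A, ∃ s : Set A, s.Countable ∧ Ideal.span s = I

end Rest


section Aux

variable {A : Type u} [Ring A]

/-- A linear map `f : M ⟶ N` of `ModuleCat`s, seen as a `LinearMap`. -/
def toLin {M N : ModuleCat.{u} A} (f : M ⟶ N) : M →ₗ[A] N := f.hom

@[simp] lemma toLin_apply {M N : ModuleCat.{u} A} (f : M ⟶ N) (x : M) : toLin f x = f x := rfl

/-- Master pullback construction. -/
lemma pb {E C U₀ : ModuleCat.{u} A} (p : E ⟶ C) (g : U₀ ⟶ C) :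
    ∃ (P : ModuleCat.{u} A) (pr₁ : P ⟶ E) (pr₂ : P ⟶ U₀),
      (∀ w, p (pr₁ w) = g (pr₂ w)) ∧
      (∀ w w', pr₁ w = pr₁ w' → pr₂ w = pr₂ w' → w = w') ∧
      (∀ (e : E) (u : U₀), p e = g u → ∃ w, pr₁ w = e ∧ pr₂ w = u) ∧
      (∀ (T : ModuleCat.{u} A) (a : T ⟶ E) (b : T ⟶ U₀), (∀ t, p (a t) = g (b t)) →
        ∃ t : T ⟶ P, (∀ x, pr₁ (t x) = a x) ∧ (∀ x, pr₂ (t x) = b x)) := by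
  classical
  set S : Submodule A (E × U₀) :=
    LinearMap.ker ((toLin p).comp (LinearMap.fst A E U₀) - (toLin g).comp (LinearMap.snd A E U₀))
    with hS
  have hmem : ∀ x : E × U₀, x ∈ S ↔ p x.1 = g x.2 := by
    intro x
    simp [hS, LinearMap.mem_ker, sub_eq_zero]
  refine ⟨ModuleCat.of A S, ModuleCat.ofHom ((LinearMap.fst A E U₀).comp S.subtype),
    ModuleCat.ofHom ((LinearMap.snd A E U₀).comp S.subtype), ?_, ?_, ?_, ?_⟩
  · intro w; exact (hmem w.1).mp w.2
  · intro w w' h1 h2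
    exact Subtype.ext (Prod.ext h1 h2)
  · intro e u h
    exact ⟨⟨(e, u), (hmem _).mpr h⟩, rfl, rfl⟩
  · intro T a b hab
    refine ⟨ModuleCat.ofHom (LinearMap.codRestrict S ((toLin a).prod (toLin b)) (fun x => (hmem _).mpr (hab x))),
      fun x => rfl, fun x => rfl⟩

/-- Schanuel-style double pullback: two short exact sequences over `C` give
a module `P` with two short exact sequences. -/
lemma pb_ses {K E C K' U₀ : ModuleCat.{u} A} {j : K ⟶ E} {p : E ⟶ C} {j' : K' ⟶ U₀} {g : U₀ ⟶ C}
    (hj : Function.Injective j) (hp : Function.Surjective p)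
    (hjp : LinearMap.range j.hom = LinearMap.ker p.hom)
    (hj' : Function.Injective j') (hg : Function.Surjective g)
    (hj'g : LinearMap.range j'.hom = LinearMap.ker g.hom) :
    ∃ (P : ModuleCat.{u} A) (pr₁ : P ⟶ E) (pr₂ : P ⟶ U₀) (ι : K ⟶ P) (ι' : K' ⟶ P),
      (Function.Injective ι ∧ Function.Surjective pr₂ ∧ LinearMap.range ι.hom = LinearMap.ker pr₂.hom) ∧
      (Function.Injective ι' ∧ Function.Surjective pr₁ ∧
        LinearMap.range ι'.hom = LinearMap.ker pr₁.hom) := by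
  obtain ⟨P, pr₁, pr₂, hcomm, hjoint, hlift, huniv⟩ := pb p g
  have hker_p : ∀ x : E, p x = 0 ↔ x ∈ LinearMap.range j.hom := by
    intro x; rw [hjp]; exact (LinearMap.mem_ker).symm
  have hker_g : ∀ x : U₀, g x = 0 ↔ x ∈ LinearMap.range j'.hom := by
    intro x; rw [hj'g]; exact (LinearMap.mem_ker).symm
  obtain ⟨ι, hι₁, hι₂⟩ := huniv K j 0 (fun t => by
    have h0 : p (j t) = 0 := (hker_p _).mpr ⟨t, rfl⟩
    exact h0.trans (map_zero g.hom).symm)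
  obtain ⟨ι', hι'₁, hι'₂⟩ := huniv K' 0 j' (fun t => by
    have h0 : g (j' t) = 0 := (hker_g _).mpr ⟨t, rfl⟩
    exact (map_zero p.hom).trans h0.symm)
  refine ⟨P, pr₁, pr₂, ι, ι', ⟨?_, ?_, ?_⟩, ⟨?_, ?_, ?_⟩⟩
  · intro a b h
    apply hj; rw [← hι₁ a, ← hι₁ b, h]
  · intro u
    obtain ⟨e, he⟩ := hp (g u)
    obtain ⟨w, hw1, hw2⟩ := hlift e u he
    exact ⟨w, hw2⟩
  · apply le_antisymm
    · rintro _ ⟨t, rfl⟩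
      simp only [LinearMap.mem_ker, hι₂ t]
      rfl
    · intro w hw
      rw [LinearMap.mem_ker] at hw
      have h0 : p (pr₁ w) = 0 := by rw [hcomm w, hw, map_zero]
      obtain ⟨t, ht⟩ := (hker_p _).mp h0
      exact ⟨t, hjoint _ _ (by rw [hι₁, ht]) (by rw [hι₂, hw]; rfl)⟩
  · intro a b h
    apply hj'; rw [← hι'₂ a, ← hι'₂ b, h]
  · intro e
    obtain ⟨u, hu⟩ := hg (p e)
    obtain ⟨w, hw1, hw2⟩ := hlift e u hu.symm
    exact ⟨w, hw1⟩
  · apply le_antisymm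
    · rintro _ ⟨t, rfl⟩
      simp only [LinearMap.mem_ker, hι'₁ t]
      rfl
    · intro w hw
      rw [LinearMap.mem_ker] at hw
      have h0 : g (pr₂ w) = 0 := by rw [← hcomm w, hw, map_zero]
      obtain ⟨t, ht⟩ := (hker_g _).mp h0
      exact ⟨t, hjoint _ _ (by rw [hι'₁, hw]; rfl) (by rw [hι'₂, ht])⟩

/-- Preimage of a short exact sequence under a surjection: given
`0 → S → UY → Y → 0` and `0 → K → Y → Z → 0`, the preimage `P = τ⁻¹(f K)` fits in
`0 → S → P → K → 0` and `0 → P → UY → Z → 0`. -/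
lemma pb_pre {S UY Y K Z : ModuleCat.{u} A} {σ : S ⟶ UY} {τ : UY ⟶ Y} {f : K ⟶ Y} {q : Y ⟶ Z}
    (hσ : Function.Injective σ) (hτ : Function.Surjective τ)
    (hστ : LinearMap.range σ.hom = LinearMap.ker τ.hom)
    (hf : Function.Injective f) (hq : Function.Surjective q)
    (hfq : LinearMap.range f.hom = LinearMap.ker q.hom) :
    ∃ (P : ModuleCat.{u} A) (π₂ : P ⟶ K) (ιS : S ⟶ P) (m : P ⟶ UY),
      (Function.Injective ιS ∧ Function.Surjective π₂ ∧ LinearMap.range ιS.hom = LinearMap.ker π₂.hom) ∧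
      (Function.Injective m ∧ Function.Surjective (τ ≫ q) ∧
        LinearMap.range m.hom = LinearMap.ker (τ ≫ q).hom) := by
  obtain ⟨P, pr₁, pr₂, hcomm, hjoint, hlift, huniv⟩ := pb τ f
  have hker_τ : ∀ x : UY, τ x = 0 ↔ x ∈ LinearMap.range σ.hom := by
    intro x; rw [hστ]; exact (LinearMap.mem_ker).symm
  have hker_q : ∀ x : Y, q x = 0 ↔ x ∈ LinearMap.range f.hom := by
    intro x; rw [hfq]; exact (LinearMap.mem_ker).symm
  obtain ⟨ιS, hι₁, hι₂⟩ := huniv S σ 0 (fun t => by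
    have h0 : τ (σ t) = 0 := (hker_τ _).mpr ⟨t, rfl⟩
    exact h0.trans (map_zero f.hom).symm)
  refine ⟨P, pr₂, ιS, pr₁, ⟨?_, ?_, ?_⟩, ⟨?_, ?_, ?_⟩⟩
  · intro a b h
    apply hσ; rw [← hι₁ a, ← hι₁ b, h]
  · intro k
    obtain ⟨u, hu⟩ := hτ (f k)
    obtain ⟨w, hw1, hw2⟩ := hlift u k hu
    exact ⟨w, hw2⟩
  · apply le_antisymm
    · rintro _ ⟨t, rfl⟩
      simp only [LinearMap.mem_ker, hι₂ t]
      rfl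
    · intro w hw
      rw [LinearMap.mem_ker] at hw
      have h0 : τ (pr₁ w) = 0 := by rw [hcomm w, hw, map_zero]
      obtain ⟨t, ht⟩ := (hker_τ _).mp h0
      exact ⟨t, hjoint _ _ (by rw [hι₁, ht]) (by rw [hι₂, hw]; rfl)⟩
  · intro a b h
    refine hjoint a b h (hf ?_)
    rw [← hcomm a, ← hcomm b, h]
  · intro z
    obtain ⟨y, hy⟩ := hq z
    obtain ⟨u, hu⟩ := hτ y
    exact ⟨u, by show q (τ u) = z; rw [hu, hy]⟩
  · apply le_antisymm
    · rintro _ ⟨w, rfl⟩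
      show q (τ (pr₁ w)) = 0
      rw [hcomm w]
      exact (hker_q _).mpr ⟨pr₂ w, rfl⟩
    · intro u hu
      have hu' : q (τ u) = 0 := hu
      obtain ⟨k, hk⟩ := (hker_q _).mp hu'
      obtain ⟨w, hw1, hw2⟩ := hlift u k hk.symm
      exact ⟨w, hw1⟩

/-- If `X` is a retract of `Y` then `Ext¹(Y,N) = 0` implies `Ext¹(X,N) = 0`. -/
lemma ext1_retract {X Y N : ModuleCat.{u} A} (s : X ⟶ Y) (ρ : Y ⟶ X)
    (hs : ∀ x, ρ (s x) = x) (hY : Ext1Zero A Y N) : Ext1Zero A X N := by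
  intro E i p hi hp hip
  obtain ⟨P, pr₁, pr₂, hcomm, hjoint, hlift, huniv⟩ := pb p ρ
  have hker_p : ∀ x : E, p x = 0 ↔ x ∈ LinearMap.range i.hom := by
    intro x; rw [hip]; exact (LinearMap.mem_ker).symm
  obtain ⟨ι, hι₁, hι₂⟩ := huniv N i 0 (fun t => by
    have h0 : p (i t) = 0 := (hker_p _).mpr ⟨t, rfl⟩
    exact h0.trans (map_zero ρ.hom).symm)
  have hιinj : Function.Injective ι := fun a b h => hi (by rw [← hι₁ a, ← hι₁ b, h])
  have hpr₂surj : Function.Surjective pr₂ := by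
    intro y
    obtain ⟨e, he⟩ := hp (ρ y)
    obtain ⟨w, hw1, hw2⟩ := hlift e y he
    exact ⟨w, hw2⟩
  have hιker : LinearMap.range ι.hom = LinearMap.ker pr₂.hom := by
    apply le_antisymm
    · rintro _ ⟨t, rfl⟩
      simp only [LinearMap.mem_ker, hι₂ t]
      rfl
    · intro w hw
      rw [LinearMap.mem_ker] at hw
      have h0 : p (pr₁ w) = 0 := by rw [hcomm w, hw, map_zero]
      obtain ⟨t, ht⟩ := (hker_p _).mp h0
      exact ⟨t, hjoint _ _ (by rw [hι₁, ht]) (by rw [hι₂, hw]; rfl)⟩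
  obtain ⟨r', hr'⟩ := hY P ι pr₂ hιinj hpr₂surj hιker
  obtain ⟨φ, hφ₁, hφ₂⟩ := huniv E (𝟙 E) (ModuleCat.ofHom ((toLin s).comp (toLin p))) (fun e => (hs (p e)).symm)
  refine ⟨φ ≫ r', ?_⟩
  apply ModuleCat.hom_ext
  apply LinearMap.ext
  intro nn
  have key : φ (i nn) = ι nn := by
    apply hjoint
    · rw [hφ₁, hι₁]; rfl
    · rw [hφ₂, hι₂]
      show s (p (i nn)) = (0 : N ⟶ Y) nn
      have h0 : p (i nn) = 0 := (hker_p _).mpr ⟨nn, rfl⟩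
      rw [h0, map_zero]; rfl
  show r' (φ (i nn)) = nn
  rw [key]
  exact congrArg (fun (f : N ⟶ N) => f nn) hr' |>.trans rfl

/-- Splitting from a section: given a s.e.s. `0 → K → Q → F → 0` and a section of `Q → F`,
there is a retraction of `K → Q`. -/
lemma split_retr {K Q F : ModuleCat.{u} A} (j : K ⟶ Q) (pr : Q ⟶ F) (s : F ⟶ Q)
    (hj : Function.Injective j) (hjpr : LinearMap.range j.hom = LinearMap.ker pr.hom)
    (hs : ∀ x, pr (s x) = x) : ∃ ρ : Q ⟶ K, ∀ x, ρ (j x) = x := by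
  let e := LinearEquiv.ofInjective (toLin j) hj
  have hmem : ∀ q : Q, q - s (pr q) ∈ LinearMap.range (toLin j) := by
    intro q
    have : q - s (pr q) ∈ LinearMap.ker pr.hom := by
      rw [LinearMap.mem_ker, map_sub, hs, sub_self]
    rw [show LinearMap.range (toLin j) = LinearMap.range j.hom from rfl, hjpr]
    exact this
  let c : Q →ₗ[A] LinearMap.range (toLin j) :=
    LinearMap.codRestrict _ (LinearMap.id - (toLin s).comp (toLin pr)) hmem
  refine ⟨ModuleCat.ofHom ((e.symm.toLinearMap).comp c), fun x => ?_⟩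
  show e.symm (c (j x)) = x
  have hcx : c (j x) = e x := by
    apply Subtype.ext
    have h0 : pr (j x) = 0 := by
      have : j x ∈ LinearMap.ker pr.hom := hjpr ▸ ⟨x, rfl⟩
      exact this
    show j x - s (pr (j x)) = ↑(e x)
    rw [h0, map_zero, sub_zero]
    exact (LinearEquiv.ofInjective_apply (toLin j) (h := hj) x).symm
  rw [hcx, LinearEquiv.symm_apply_apply]

/-- Extension closure for `Ext¹(-,N) = 0`: in `0 → X → Y → Z → 0`, if the classes of
`X` and `Z` vanish then so does that of `Y`. -/
lemma ext1_extension {X Y Z N : ModuleCat.{u} A} (f : X ⟶ Y) (q : Y ⟶ Z)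
    (hf : Function.Injective f) (hq : Function.Surjective q)
    (hfq : LinearMap.range f.hom = LinearMap.ker q.hom)
    (hX : Ext1Zero A X N) (hZ : Ext1Zero A Z N) : Ext1Zero A Y N := by
  intro E i p hi hp hip
  obtain ⟨W, pr₁, pr₂, hcomm, hjoint, hlift, huniv⟩ := pb p f
  have hker_p : ∀ x : E, p x = 0 ↔ x ∈ LinearMap.range i.hom := by
    intro x; rw [hip]; exact (LinearMap.mem_ker).symm
  have hker_q : ∀ x : Y, q x = 0 ↔ x ∈ LinearMap.range f.hom := by
    intro x; rw [hfq]; exact (LinearMap.mem_ker).symm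
  obtain ⟨ι, hι₁, hι₂⟩ := huniv N i 0 (fun t => by
    have h0 : p (i t) = 0 := (hker_p _).mpr ⟨t, rfl⟩
    exact h0.trans (map_zero f.hom).symm)
  have hιinj : Function.Injective ι := fun a b h => hi (by rw [← hι₁ a, ← hι₁ b, h])
  have hpr₂surj : Function.Surjective pr₂ := by
    intro x
    obtain ⟨e, he⟩ := hp (f x)
    obtain ⟨w, hw1, hw2⟩ := hlift e x he
    exact ⟨w, hw2⟩
  have hιker : LinearMap.range ι.hom = LinearMap.ker pr₂.hom := by
    apply le_antisymm
    · rintro _ ⟨t, rfl⟩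
      simp only [LinearMap.mem_ker, hι₂ t]; rfl
    · intro w hw
      rw [LinearMap.mem_ker] at hw
      have h0 : p (pr₁ w) = 0 := by rw [hcomm w, hw, map_zero]
      obtain ⟨t, ht⟩ := (hker_p _).mp h0
      exact ⟨t, hjoint _ _ (by rw [hι₁, ht]) (by rw [hι₂, hw]; rfl)⟩
  obtain ⟨r'', hr''⟩ := hX W ι pr₂ hιinj hpr₂surj hιker
  have hr''app : ∀ t, r'' (ι t) = t := fun t =>
    (congrArg (fun (f : N ⟶ N) => f t) hr'').trans rfl
  -- the map `w ↦ pr₁ w - i (r'' w)` and the quotient by its range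
  set st : W →ₗ[A] E := (toLin pr₁) - (toLin i).comp (toLin r'') with hst
  have hstapp : ∀ w, st w = pr₁ w - i (r'' w) := fun w => rfl
  set S : Submodule A E := LinearMap.range st with hSdef
  set Q := ModuleCat.of A (E ⧸ S) with hQdef
  let mk : E ⟶ Q := ModuleCat.ofHom S.mkQ
  have hmk : ∀ x : E, mk x = Submodule.Quotient.mk x := fun x => rfl
  let iQ : N ⟶ Q := i ≫ mk
  have hiQinj : Function.Injective iQ := by
    intro a b h
    have h2 : i a - i b ∈ S := by
      rw [← Submodule.Quotient.eq]
      exact h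
    obtain ⟨w, hw⟩ := h2
    have h3 : p (i a - i b) = 0 := by
      rw [map_sub]
      have ha : p (i a) = 0 := (hker_p _).mpr ⟨a, rfl⟩
      have hb : p (i b) = 0 := (hker_p _).mpr ⟨b, rfl⟩
      rw [ha, hb, sub_zero]
    have h4 : f (pr₂ w) = 0 := by
      have := hcomm w
      have h5 : p (st w) = p (pr₁ w) - p (i (r'' w)) := by
        rw [hstapp, map_sub]
      have h6 : p (i (r'' w)) = 0 := (hker_p _).mpr ⟨r'' w, rfl⟩
      rw [hw] at h5
      rw [h3, h6, sub_zero] at h5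
      rw [← this, ← h5]
    have h7 : pr₂ w = 0 := hf (by rw [h4, map_zero])
    have h8 : w ∈ LinearMap.ker pr₂.hom := h7
    rw [← hιker] at h8
    obtain ⟨t, rfl⟩ := h8
    have h9 : st (ι t) = 0 := by
      rw [hstapp, hι₁, hr''app, sub_self]
    rw [h9] at hw
    have h10 : i a = i b := by
      have := sub_eq_zero.mp hw.symm
      exact sub_eq_zero.mp hw.symm
    exact hi h10
  have hScond : S ≤ LinearMap.ker ((toLin q).comp (toLin p)) := by
    rintro _ ⟨w, rfl⟩
    show q (p (st w)) = 0
    have h5 : p (st w) = f (pr₂ w) := by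
      rw [hstapp, map_sub, hcomm w]
      have h6 : p (i (r'' w)) = 0 := (hker_p _).mpr ⟨r'' w, rfl⟩
      rw [h6, sub_zero]
    rw [h5]
    exact (hker_q _).mpr ⟨pr₂ w, rfl⟩
  let pQ : Q ⟶ Z := ModuleCat.ofHom (S.liftQ ((toLin q).comp (toLin p)) hScond)
  have hpQ : ∀ x : E, pQ (mk x) = q (p x) := fun x => rfl
  have hpQsurj : Function.Surjective pQ := by
    intro z
    obtain ⟨y, hy⟩ := hq z
    obtain ⟨e, he⟩ := hp y
    exact ⟨mk e, by rw [hpQ, he, hy]⟩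
  have hiQker : LinearMap.range iQ.hom = LinearMap.ker pQ.hom := by
    apply le_antisymm
    · rintro _ ⟨t, rfl⟩
      show pQ (mk (i t)) = 0
      rw [hpQ]
      have h0 : p (i t) = 0 := (hker_p _).mpr ⟨t, rfl⟩
      rw [h0, map_zero]
    · intro c hc
      obtain ⟨e, rfl⟩ := Submodule.mkQ_surjective S c
      rw [LinearMap.mem_ker] at hc
      have h0 : q (p e) = 0 := hc
      obtain ⟨x, hx⟩ := (hker_q _).mp h0
      obtain ⟨w, hw1, hw2⟩ := hlift e x hx.symm
      refine ⟨r'' w, ?_⟩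
      show mk (i (r'' w)) = Submodule.Quotient.mk e
      rw [hmk]
      rw [Submodule.Quotient.eq]
      refine ⟨-w, ?_⟩
      rw [map_neg, hstapp, hw1]
      abel
  obtain ⟨ρ, hρ⟩ := hZ Q iQ pQ hiQinj hpQsurj hiQker
  refine ⟨mk ≫ ρ, ?_⟩
  show i ≫ mk ≫ ρ = 𝟙 N
  rw [← Category.assoc]
  exact hρ


lemma resLE_succ_iff {U : Set (ModuleCat.{u} A)} {m : ℕ} {M : ModuleCat.{u} A} :
    ResLE A U (m + 1) M ↔ (ResLE A U m M ∨
      ∃ (K U₀ : ModuleCat.{u} A) (j : K ⟶ U₀) (p : U₀ ⟶ M),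
        U₀ ∈ U ∧ Function.Injective j ∧ Function.Surjective p ∧
          LinearMap.range j.hom = LinearMap.ker p.hom ∧ ResLE A U m K) := Iff.rfl

lemma resLE_succ {U : Set (ModuleCat.{u} A)} {m : ℕ} {M : ModuleCat.{u} A}
    (h : ResLE A U m M) : ResLE A U (m + 1) M := resLE_succ_iff.mpr (Or.inl h)

lemma resLE_mono {U : Set (ModuleCat.{u} A)} {m k : ℕ} (hmk : m ≤ k) {M : ModuleCat.{u} A}
    (h : ResLE A U m M) : ResLE A U k M := by
  induction k with
  | zero => exact (Nat.le_zero.mp hmk) ▸ h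
  | succ k ih =>
    rcases Nat.eq_or_lt_of_le hmk with h' | h'
    · exact h' ▸ h
    · exact resLE_succ (ih (Nat.lt_succ_iff.mp h'))

lemma memU_ext1 {U V : Set (ModuleCat.{u} A)} (hpair : IsCotorsionPair A U V)
    {M : ModuleCat.{u} A} (hM : M ∈ U) {N : ModuleCat.{u} A} (hN : N ∈ V) :
    Ext1Zero A M N := by
  rw [hpair.1] at hM
  exact hM N hN

lemma memU_of_ext1 {U V : Set (ModuleCat.{u} A)} (hpair : IsCotorsionPair A U V)
    {M : ModuleCat.{u} A} (h : ∀ N ∈ V, Ext1Zero A M N) : M ∈ U := by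
  rw [hpair.1]
  exact h

lemma memU_prod {U V : Set (ModuleCat.{u} A)} (hpair : IsCotorsionPair A U V)
    {U₀ U₁ : ModuleCat.{u} A} (h0 : U₀ ∈ U) (h1 : U₁ ∈ U) :
    ModuleCat.of A (U₀ × U₁) ∈ U := by
  refine memU_of_ext1 hpair (fun N hN => ?_)
  refine ext1_extension (X := U₀) (Y := ModuleCat.of A (U₀ × U₁)) (Z := U₁)
    (ModuleCat.ofHom (LinearMap.inl A U₀ U₁)) (ModuleCat.ofHom (LinearMap.snd A U₀ U₁)) LinearMap.inl_injective
    (fun y => ⟨(0, y), rfl⟩) ?_ (memU_ext1 hpair h0 hN) (memU_ext1 hpair h1 hN)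
  apply le_antisymm
  · rintro _ ⟨a, rfl⟩
    show (a, (0 : U₁)).2 = 0
    rfl
  · rintro ⟨a, b⟩ hx
    have hb : b = 0 := hx
    exact ⟨a, by rw [hb]; rfl⟩

/-- `U` is resolving: the kernel of a surjection between modules in `U` is in `U`. -/
lemma resolv {U V : Set (ModuleCat.{u} A)} (hpair : IsCotorsionPair A U V)
    (hhered : IsHereditaryPair A U V) {K Y Z : ModuleCat.{u} A} (f : K ⟶ Y) (g : Y ⟶ Z)
    (hf : Function.Injective f) (hg : Function.Surjective g)
    (hfg : LinearMap.range f.hom = LinearMap.ker g.hom) (hY : Y ∈ U) (hZ : Z ∈ U) : K ∈ U := by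
  refine memU_of_ext1 hpair (fun N hN => ?_)
  let P : ProjectiveResolution Z := ProjectiveResolution.of Z
  have hd10 : LinearMap.range (P.complex.d 2 1).hom = LinearMap.ker (P.complex.d 1 0).hom := by
    have h := P.exact_succ 0
    rwa [ShortComplex.moduleCat_exact_iff_range_eq_ker] at h
  let piZ : P.complex.X 0 ⟶ Z := P.π.f 0
  have hpiZsurj : Function.Surjective piZ := (ModuleCat.epi_iff_surjective _).mp (inferInstanceAs (Epi (P.π.f 0)))
  have hpiZker : LinearMap.range (P.complex.d 1 0).hom = LinearMap.ker piZ.hom := by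
    have h := P.exact₀
    rwa [ShortComplex.moduleCat_exact_iff_range_eq_ker] at h
  set S21 : Submodule A (P.complex.X 1) := LinearMap.range (P.complex.d 2 1).hom with hS21
  set Q₁ := ModuleCat.of A ((P.complex.X 1) ⧸ S21) with hQ₁
  have hle : S21 ≤ LinearMap.ker (toLin (P.complex.d 1 0)) := le_of_eq hd10
  let dbar : Q₁ ⟶ P.complex.X 0 := ModuleCat.ofHom (S21.liftQ (toLin (P.complex.d 1 0)) hle)
  have hdbar_inj : Function.Injective dbar := by
    rw [← LinearMap.ker_eq_bot]
    exact Submodule.ker_liftQ_eq_bot _ _ _ (le_of_eq hd10.symm)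
  have hdbar_range : LinearMap.range dbar.hom = LinearMap.ker piZ.hom := by
    rw [show LinearMap.range dbar.hom = LinearMap.range (S21.liftQ (toLin (P.complex.d 1 0)) hle)
      from rfl, Submodule.range_liftQ]
    exact hpiZker
  have hcok : Ext1Zero A (cokernel (P.complex.d 2 1)) N := hhered Z hZ N hN 1 P
  have hQ₁ext : Ext1Zero A Q₁ N := by
    have e := ModuleCat.cokernelIsoRangeQuotient (P.complex.d 2 1)
    refine ext1_retract e.inv e.hom (fun x => ?_) hcok
    have h := e.inv_hom_id
    exact (congrArg (fun (f : Q₁ ⟶ Q₁) => f x) h).trans rfl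
  obtain ⟨Q', pr₁, pr₂, ι, ι', ⟨hιinj, hpr₂surj, hιker⟩, ⟨hι'inj, hpr₁surj, hι'ker⟩⟩ :=
    pb_ses (j := f) (p := g) (j' := dbar) (g := piZ)
      hf hg hfg hdbar_inj hpiZsurj hdbar_range
  have hQ'ext : Ext1Zero A Q' N :=
    ext1_extension ι' pr₁ hι'inj hpr₁surj hι'ker hQ₁ext (memU_ext1 hpair hY hN)
  haveI : Epi pr₂ := (ModuleCat.epi_iff_surjective _).mpr hpr₂surj
  let s0 : P.complex.X 0 ⟶ Q' := Projective.factorThru (𝟙 _) pr₂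
  have hs0 : ∀ x, pr₂ (s0 x) = x := by
    intro x
    have h := Projective.factorThru_comp (𝟙 (P.complex.X 0)) pr₂
    exact (congrArg (fun (f : P.complex.X 0 ⟶ P.complex.X 0) => f x) h).trans rfl
  obtain ⟨ρK, hρK⟩ := split_retr ι pr₂ s0 hιinj hιker hs0
  exact ext1_retract ι ρK hρK hQ'ext

/-- Kernel lemma when the quotient is in `U`: in `0 → K → Y → Z → 0` with `Z ∈ U`,
`ResLE a Y` implies `ResLE a K`. -/
lemma kerU {U V : Set (ModuleCat.{u} A)} (hpair : IsCotorsionPair A U V)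
    (hhered : IsHereditaryPair A U V) :
    ∀ (a : ℕ) {K Y Z : ModuleCat.{u} A} (f : K ⟶ Y) (g : Y ⟶ Z),
      Function.Injective f → Function.Surjective g →
      LinearMap.range f.hom = LinearMap.ker g.hom →
      Z ∈ U → ResLE A U a Y → ResLE A U a K := by
  intro a
  induction a with
  | zero =>
    intro K Y Z f g hf hg hfg hZ hY
    exact resolv hpair hhered f g hf hg hfg hY hZ
  | succ a ih =>
    intro K Y Z f g hf hg hfg hZ hY
    rcases resLE_succ_iff.mp hY with hY' | ⟨S, UY, σ, τ, hUY, hσ, hτ, hστ, hS⟩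
    · exact resLE_succ (ih f g hf hg hfg hZ hY')
    · obtain ⟨P, π₂, ιS, m, ⟨h1, h2, h3⟩, ⟨h4, h5, h6⟩⟩ := pb_pre hσ hτ hστ hf hg hfg
      have hP : P ∈ U := resolv hpair hhered m (τ ≫ g) h4 h5 h6 hUY hZ
      exact resLE_succ_iff.mpr (Or.inr ⟨S, P, ιS, π₂, hP, h1, h2, h3, hS⟩)

/-- Extension lemma when the quotient is in `U`: in `0 → X → Y → Z → 0` with `Z ∈ U`,
`ResLE m X` implies `ResLE m Y`. -/
lemma extL {U V : Set (ModuleCat.{u} A)} (hpair : IsCotorsionPair A U V)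
    (hhered : IsHereditaryPair A U V) (hcomplete : IsCompletePair A U V) :
    ∀ (m : ℕ) {X Y Z : ModuleCat.{u} A} (f : X ⟶ Y) (g : Y ⟶ Z),
      Function.Injective f → Function.Surjective g →
      LinearMap.range f.hom = LinearMap.ker g.hom →
      Z ∈ U → ResLE A U m X → ResLE A U m Y := by
  intro m
  induction m with
  | zero =>
    intro X Y Z f g hf hg hfg hZ hX
    exact memU_of_ext1 hpair fun N hN =>
      ext1_extension f g hf hg hfg (memU_ext1 hpair hX hN) (memU_ext1 hpair hZ hN)
  | succ m ih =>
    intro X Y Z f g hf hg hfg hZ hX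
    rcases resLE_succ_iff.mp hX with hX' | ⟨K, U₀, j, π, hU₀, hj, hπ, hjπ, hK⟩
    · exact resLE_succ (ih f g hf hg hfg hZ hX')
    · obtain ⟨KY, UY, σY, τ, hUY, hKY, hσY, hτ, hστ⟩ := hcomplete.1 Y
      -- W = τ⁻¹(f X): `0 → KY → W → X → 0` and `0 → W → UY → Z → 0`
      obtain ⟨W, w₂, ιW, mW, ⟨hιWinj, hw₂surj, hιWker⟩, ⟨hmWinj, hτgsurj, hmWker⟩⟩ :=
        pb_pre hσY hτ hστ hf hg hfg
      have hW : W ∈ U := resolv hpair hhered mW (τ ≫ g) hmWinj hτgsurj hmWker hUY hZ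
      -- Schanuel pullback over X of `W → X` and `U₀ → X`
      obtain ⟨Q, q₁, q₂, ιKY, ιK, ⟨hιKYinj, hq₂surj, hιKYker⟩, ⟨hιKinj, hq₁surj, hιKker⟩⟩ :=
        pb_ses (j := ιW) (p := w₂) (j' := j) (g := π) hιWinj hw₂surj hιWker hj hπ hjπ
      have hQ : ResLE A U m Q := ih ιK q₁ hιKinj hq₁surj hιKker hW hK
      obtain ⟨ρβ, hρβ⟩ := (memU_ext1 hpair hU₀ hKY) Q ιKY q₂ hιKYinj hq₂surj hιKYker
      have hρβ' : ∀ x, ρβ (ιKY x) = x := fun x =>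
        (congrArg (fun (f : KY ⟶ KY) => f x) hρβ).trans rfl
      -- assemble the witness sequence `0 → Q → UY × U₀ → Y → 0`
      let Ustar := ModuleCat.of A (UY × U₀)
      have hUstar : Ustar ∈ U := memU_prod hpair hUY hU₀
      let jstar : Q ⟶ Ustar := ModuleCat.ofHom (((toLin σY).comp (toLin ρβ)).prod (toLin q₂))
      let φ : Ustar ⟶ Y := ModuleCat.ofHom ((toLin τ).comp (LinearMap.fst A UY U₀))
      have hjstar : ∀ x : Q, jstar x = (σY (ρβ x), q₂ x) := fun x => rfl
      have hφ : ∀ x : UY × U₀, φ x = τ x.1 := fun x => rfl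
      have hkerq₂ : ∀ x : Q, q₂ x = 0 ↔ x ∈ LinearMap.range ιKY.hom := by
        intro x; rw [hιKYker]; exact (LinearMap.mem_ker).symm
      have hjinj : Function.Injective jstar := by
        intro a b hab
        rw [hjstar, hjstar, Prod.mk.injEq] at hab
        have h1 : ρβ a = ρβ b := hσY hab.1
        have h2 : q₂ (a - b) = 0 := by rw [map_sub, hab.2, sub_self]
        obtain ⟨k, hk⟩ := (hkerq₂ _).mp h2
        have h3 : ρβ (a - b) = 0 := by rw [map_sub, h1, sub_self]
        rw [← hk, hρβ'] at h3
        rw [h3, map_zero] at hk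
        exact sub_eq_zero.mp hk.symm
      have hφsurj : Function.Surjective φ := by
        intro y
        obtain ⟨u, hu⟩ := hτ y
        exact ⟨(u, 0), hu⟩
      have hrange : LinearMap.range jstar.hom = LinearMap.ker φ.hom := by
        apply le_antisymm
        · rintro _ ⟨x, rfl⟩
          show φ (jstar x) = 0
          rw [hjstar, hφ]
          have : σY (ρβ x) ∈ LinearMap.ker τ.hom := hστ ▸ ⟨ρβ x, rfl⟩
          exact this
        · rintro ⟨u, u₀⟩ hx
          have hu : τ u = 0 := hx
          have : u ∈ LinearMap.range σY.hom := by rw [hστ]; exact hu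
          obtain ⟨k, hk⟩ := this
          obtain ⟨x₀, hx₀⟩ := hq₂surj u₀
          refine ⟨x₀ + ιKY (k - ρβ x₀), ?_⟩
          rw [hjstar]
          have e1 : ρβ (x₀ + ιKY (k - ρβ x₀)) = k := by
            rw [map_add, hρβ']
            abel
          have e2 : q₂ (x₀ + ιKY (k - ρβ x₀)) = u₀ := by
            rw [map_add]
            have : q₂ (ιKY (k - ρβ x₀)) = 0 := by
              have hm : ιKY (k - ρβ x₀) ∈ LinearMap.ker q₂.hom := hιKYker ▸ ⟨_, rfl⟩
              exact hm
            rw [this, hx₀, add_zero]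
          rw [e1, e2, hk]
      exact resLE_succ_iff.mpr
        (Or.inr ⟨Q, Ustar, jstar, φ, hUstar, hjinj, hφsurj, hrange, hQ⟩)

lemma resLE_zero_iff {U : Set (ModuleCat.{u} A)} {M : ModuleCat.{u} A} :
    ResLE A U 0 M ↔ M ∈ U := Iff.rfl

/-- Simultaneous kernel / extension / cokernel lemmas, by induction on the total dimension. -/
lemma triple {U V : Set (ModuleCat.{u} A)} (hpair : IsCotorsionPair A U V)
    (hhered : IsHereditaryPair A U V) (hcomplete : IsCompletePair A U V) :
    ∀ s : ℕ,
      (∀ a m, a + m ≤ s → ∀ {K Y Z : ModuleCat.{u} A} (f : K ⟶ Y) (g : Y ⟶ Z),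
        Function.Injective f → Function.Surjective g →
        LinearMap.range f.hom = LinearMap.ker g.hom →
        ResLE A U a Y → ResLE A U m Z → ∃ t, ResLE A U t K) ∧
      (∀ a m, a + m ≤ s → ∀ {X Y Z : ModuleCat.{u} A} (f : X ⟶ Y) (g : Y ⟶ Z),
        Function.Injective f → Function.Surjective g →
        LinearMap.range f.hom = LinearMap.ker g.hom →
        ResLE A U a X → ResLE A U m Z → ∃ t, ResLE A U t Y) ∧
      (∀ a m, a + m ≤ s → ∀ {K P Y : ModuleCat.{u} A} (f : K ⟶ P) (g : P ⟶ Y),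
        Function.Injective f → Function.Surjective g →
        LinearMap.range f.hom = LinearMap.ker g.hom →
        ResLE A U m K → ResLE A U a P → ∃ t, ResLE A U t Y) := by
  intro s
  induction s using Nat.strong_induction_on with
  | _ s ih =>
  have T1 : ∀ a m, a + m ≤ s → ∀ {K Y Z : ModuleCat.{u} A} (f : K ⟶ Y) (g : Y ⟶ Z),
      Function.Injective f → Function.Surjective g →
      LinearMap.range f.hom = LinearMap.ker g.hom →
      ResLE A U a Y → ResLE A U m Z → ∃ t, ResLE A U t K := by
    intro a m hm K Y Z f g hf hg hfg hY hZ
    cases m with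
    | zero =>
      exact ⟨a, kerU hpair hhered a f g hf hg hfg (resLE_zero_iff.mp hZ) hY⟩
    | succ m =>
      rcases resLE_succ_iff.mp hZ with hZ' | ⟨KZ, UZ, jz, pz, hUZ, hjz, hpz, hjpz, hKZ⟩
      · exact (ih (a + m) (by omega)).1 a m le_rfl f g hf hg hfg hY hZ'
      · obtain ⟨P', pr₁, pr₂, ι, ι', ⟨hιi, hp₂s, hιk⟩, ⟨hι'i, hp₁s, hι'k⟩⟩ :=
          pb_ses (j := f) (p := g) (j' := jz) (g := pz) hf hg hfg hjz hpz hjpz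
        obtain ⟨t, hP'⟩ :=
          (ih (m + a) (by omega)).2.1 m a le_rfl ι' pr₁ hι'i hp₁s hι'k hKZ hY
        exact ⟨t, kerU hpair hhered t ι pr₂ hιi hp₂s hιk hUZ hP'⟩
  have T2 : ∀ a m, a + m ≤ s → ∀ {X Y Z : ModuleCat.{u} A} (f : X ⟶ Y) (g : Y ⟶ Z),
      Function.Injective f → Function.Surjective g →
      LinearMap.range f.hom = LinearMap.ker g.hom →
      ResLE A U a X → ResLE A U m Z → ∃ t, ResLE A U t Y := by
    intro a m hm X Y Z f g hf hg hfg hX hZ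
    cases m with
    | zero =>
      exact ⟨a, extL hpair hhered hcomplete a f g hf hg hfg (resLE_zero_iff.mp hZ) hX⟩
    | succ m =>
      rcases resLE_succ_iff.mp hZ with hZ' | ⟨KZ, UZ, jz, pz, hUZ, hjz, hpz, hjpz, hKZ⟩
      · exact (ih (a + m) (by omega)).2.1 a m le_rfl f g hf hg hfg hX hZ'
      · obtain ⟨P'', pr₁, pr₂, ι, ι', ⟨hιi, hp₂s, hιk⟩, ⟨hι'i, hp₁s, hι'k⟩⟩ :=
          pb_ses (j := f) (p := g) (j' := jz) (g := pz) hf hg hfg hjz hpz hjpz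
        have hP'' : ResLE A U a P'' :=
          extL hpair hhered hcomplete a ι pr₂ hιi hp₂s hιk hUZ hX
        exact (ih (a + m) (by omega)).2.2 a m le_rfl ι' pr₁ hι'i hp₁s hι'k hKZ hP''
  refine ⟨T1, T2, ?_⟩
  intro a m hm K P Y f g hf hg hfg hK hP
  obtain ⟨KY, UY, σ, τ, hUY, hKY, hσ, hτ, hστ⟩ := hcomplete.1 Y
  obtain ⟨Q, pr₁, pr₂, ι, ι', ⟨hιi, hp₂s, hιk⟩, ⟨hι'i, hp₁s, hι'k⟩⟩ :=
    pb_ses (j := f) (p := g) (j' := σ) (g := τ) hf hg hfg hσ hτ hστ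
  have hQ : ResLE A U m Q := extL hpair hhered hcomplete m ι pr₂ hιi hp₂s hιk hUY hK
  obtain ⟨t, hKYt⟩ := T1 m a (by omega) ι' pr₁ hι'i hp₁s hι'k hQ hP
  exact ⟨t + 1, resLE_succ_iff.mpr (Or.inr ⟨KY, UY, σ, τ, hUY, hσ, hτ, hστ, hKYt⟩)⟩

lemma resLE_of_resDim_le {U : Set (ModuleCat.{u} A)} {M : ModuleCat.{u} A} {n : ℕ}
    (h : resDim A U M ≤ (n : ℕ∞)) : ResLE A U n M := by
  have h2 : resDim A U M < ((n + 1 : ℕ) : ℕ∞) :=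
    lt_of_le_of_lt h (by exact_mod_cast Nat.lt_succ_self n)
  rw [resDim] at h2
  obtain ⟨c, hc, hlt⟩ := sInf_lt_iff.mp h2
  obtain ⟨k, rfl, hk⟩ := hc
  have hkn : k ≤ n := by
    have hlt' : k < n + 1 := by exact_mod_cast hlt
    omega
  exact resLE_mono hkn hk

lemma resDim_le_of_resLE {U : Set (ModuleCat.{u} A)} {M : ModuleCat.{u} A} {m : ℕ}
    (h : ResLE A U m M) : resDim A U M ≤ (m : ℕ∞) :=
  sInf_le ⟨m, rfl, h⟩

end Aux

/-- `U_n ∩ U_n^⊥ = Inj` when `max{relspli(U), relFPD(U)} ≤ n`. -/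
theorem stmt_4 (A : Type u) [Ring A] (U V : Set (ModuleCat.{u} A))
    (hpair : IsCotorsionPair A U V) (hcomplete : IsCompletePair A U V)
    (hhered : IsHereditaryPair A U V) (hwrp : WeaklyRightPeriodic A V)
    (n : ℕ) (hs : relspli A U ≤ n) (hf : relFPD A U ≤ n)
    (M : ModuleCat.{u} A) :
    Injective M ↔
      (ResLE A U n M ∧ ∀ L : ModuleCat.{u} A, ResLE A U n L → Ext1Zero A L M) := by
  have hdimInj : ∀ (I : ModuleCat.{u} A), Injective I → ResLE A U n I := by
    intro I hI
    apply resLE_of_resDim_le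
    refine le_trans ?_ hs
    unfold relspli
    exact le_iSup₂ (f := fun (I : ModuleCat.{u} A) (_ : Injective I) => resDim A U I) I hI
  have cap : ∀ (C : ModuleCat.{u} A), (∃ t, ResLE A U t C) → ResLE A U n C := by
    rintro C ⟨t, ht⟩
    apply resLE_of_resDim_le
    refine le_trans ?_ hf
    have h1 : resDim A U C ≤ (t : ℕ∞) := resDim_le_of_resLE ht
    have h2 : resDim A U C ≠ ⊤ := by
      intro hT
      rw [hT] at h1
      exact (by simp : ((t : ℕ∞) ≠ ⊤)) (top_le_iff.mp h1)
    unfold relFPD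
    exact le_iSup₂ (f := fun (C : ModuleCat.{u} A) (_ : resDim A U C ≠ ⊤) => resDim A U C) C h2
  constructor
  · intro hM
    refine ⟨hdimInj M hM, ?_⟩
    intro L _ E i p hi hp hip
    haveI : Mono i := (ModuleCat.mono_iff_injective i).mpr hi
    exact ⟨Injective.factorThru (𝟙 M) i, Injective.comp_factorThru _ _⟩
  · rintro ⟨hres, hperp⟩
    let E := Injective.under M
    let iM : M ⟶ E := Injective.ι M
    have hiM : Function.Injective iM := (ModuleCat.mono_iff_injective _).mp inferInstance
    have hE : ResLE A U n E := hdimInj E inferInstance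
    let Cq := ModuleCat.of A (E ⧸ LinearMap.range iM.hom)
    let pq : E ⟶ Cq := ModuleCat.ofHom (LinearMap.range (toLin iM)).mkQ
    have hpq : Function.Surjective pq := Submodule.mkQ_surjective _
    have hker : LinearMap.range iM.hom = LinearMap.ker pq.hom := (Submodule.ker_mkQ _).symm
    obtain ⟨t, hC⟩ :=
      (triple hpair hhered hcomplete (n + n)).2.2 n n le_rfl iM pq hiM hpq hker hres hE
    have hCn : ResLE A U n Cq := cap _ ⟨t, hC⟩
    obtain ⟨r, hr⟩ := hperp Cq hCn E iM pq hiM hpq hker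
    refine ⟨?_⟩
    intro X Y g fXY hmf
    refine ⟨Injective.factorThru (g ≫ iM) fXY ≫ r, ?_⟩
    rw [← Category.assoc, Injective.comp_factorThru, Category.assoc, hr, Category.comp_id]

end OSG
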